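/- For X ⊆ B(n) with no idempotents, the following are equivalent: (i) X is a face of the subsemigroup complex H(B(n)); (ii) the edges of the directed graph Γ(X) can be enumerated e_1,...,e_m so that each e_i is a separating edge of the subgraph with edges {e_1,...,e_i}; (iii) every subgraph of Γ(X) with at least one edge has a separating edge. -/

import Mathlib

/-- The aperiodic Brandt semigroup `B(n)` on `({1..n} × {1..n}) ∪ {0}`,
with `none` playing the role of the zero element. -/
abbrev B (n : ℕ) := Option (Fin n × Fin n)

/-- Multiplication in `B(n)`: `(i,j)(k,l) = (i,l)` if `j = k`, and `0` otherwise. -/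
def bmul {n : ℕ} : B n → B n → B n
  | some (i, j), some (k, l) => if j = k then some (i, l) else none
  | _, _ => none

/-- A subset of `B(n)` is a subsemigroup if it is closed under multiplication. -/
def IsSub {n : ℕ} (T : Set (B n)) : Prop :=
  ∀ x ∈ T, ∀ y ∈ T, bmul x y ∈ T

/-- The subsemigroup of `B(n)` generated by a subset. -/
def gen {n : ℕ} (X : Set (B n)) : Set (B n) :=
  ⋂₀ {T | IsSub T ∧ X ⊆ T}

/-- `X` is a face of the subsemigroup complex `H(B(n))`: it admits an enumeration
producing a strictly increasing chain of generated subsemigroups. -/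
def IsFace {n : ℕ} (X : Set (B n)) : Prop :=
  ∃ l : List (B n), l.Nodup ∧ {x | x ∈ l} = X ∧
    ∀ (i : ℕ) (h : i < l.length), l.get ⟨i, h⟩ ∉ gen {x | x ∈ l.take i}

/-- A facet is a maximal face. -/
def IsFacet {n : ℕ} (X : Set (B n)) : Prop :=
  IsFace X ∧ ∀ Y : Set (B n), IsFace Y → X ⊆ Y → X = Y

/-- Product `x * y₁ * ⋯ * y_k` in `B(n)`. -/
def bprod {n : ℕ} : B n → List (B n) → B n
  | x, [] => x
  | x, y :: l => bprod (bmul x y) l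

/-- Closure under the inverse operation `(i,j) ↦ (j,i)`. -/
def InvClosed {n : ℕ} (T : Set (B n)) : Prop :=
  ∀ i j : Fin n, some (i, j) ∈ T → some (j, i) ∈ T

/-- A nilpotent subsemigroup of `B(n)` containing `0`: some power is `{0}`. -/
def IsNilpSub {n : ℕ} (T : Set (B n)) : Prop :=
  IsSub T ∧ none ∈ T ∧ ∃ k : ℕ, 1 ≤ k ∧
    ∀ (x : B n) (l : List (B n)), x ∈ T → (∀ y ∈ l, y ∈ T) →
      l.length + 1 = k → bprod x l = none
/-- `e` is a separating edge of the digraph with edge set `Es`: `e ∈ Es` and there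
is no directed path from the source of `e` to its target avoiding `e`. -/
def SepEdge {n : ℕ} (Es : Set (Fin n × Fin n)) (e : Fin n × Fin n) : Prop :=
  e ∈ Es ∧
    ¬ Relation.TransGen (fun a b : Fin n => (a, b) ∈ Es ∧ (a, b) ≠ e) e.1 e.2

lemma subset_gen {n : ℕ} (S : Set (B n)) : S ⊆ gen S := by
  intro x hx T hT; exact hT.2 hx

lemma isSub_gen {n : ℕ} (S : Set (B n)) : IsSub (gen S) := by
  intro x hx y hy T hT
  exact hT.1 x (hx T hT) y (hy T hT)

lemma gen_some_iff {n : ℕ} (S : Set (B n)) (a b : Fin n) :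
    some (a, b) ∈ gen S ↔ Relation.TransGen (fun a b => some (a, b) ∈ S) a b := by
  constructor
  · intro h
    have := h {x | x = none ∨ ∃ p q : Fin n, x = some (p, q) ∧
        Relation.TransGen (fun a b => some (a, b) ∈ S) p q} ?_
    · rcases this with h | ⟨p, q, hpq, ht⟩
      · exact absurd h (by simp)
      · simp only [Option.some.injEq, Prod.mk.injEq] at hpq
        obtain ⟨rfl, rfl⟩ := hpq
        exact ht
    · constructor
      · rintro x (rfl | ⟨p, q, rfl, hpq⟩) y hy
        · left; rfl
        · rcases hy with rfl | ⟨r, s, rfl, hrs⟩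
          · left; rfl
          · by_cases h : q = r
            · subst h
              right; exact ⟨p, s, by unfold bmul; simp, hpq.trans hrs⟩
            · left; unfold bmul; simp [h]
      · intro x hx
        match x with
        | none => left; rfl
        | some (p, q) => right; exact ⟨p, q, rfl, Relation.TransGen.single hx⟩
  · intro h
    induction h with
    | single h => exact subset_gen S h
    | tail _ h2 ih =>
      have := isSub_gen S _ ih _ (subset_gen S h2)
      unfold bmul at this; simpa using this

lemma exists_map_some {n : ℕ} (l : List (B n)) (h : ∀ x ∈ l, x ≠ none) :
    ∃ l' : List (Fin n × Fin n), l = List.map some l' := by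
  induction l with
  | nil => exact ⟨[], rfl⟩
  | cons a t ih =>
    obtain ⟨l', rfl⟩ := ih (fun x hx => h x (List.mem_cons_of_mem _ hx))
    match a, h a List.mem_cons_self with
    | some e, _ => exact ⟨e :: l', rfl⟩

lemma not_mem_take {α : Type*} (l : List α) (hl : l.Nodup) (i : ℕ) (h : i < l.length) :
    l.get ⟨i, h⟩ ∉ l.take i := by
  intro hmem
  obtain ⟨⟨j, hj⟩, hget⟩ := List.mem_iff_get.mp hmem
  have hj2 : j < i := by simp [List.length_take] at hj; omega
  have hj' : j < l.length := hj2.trans h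
  have heq : l.get ⟨j, hj'⟩ = l.get ⟨i, h⟩ := by
    rw [← hget]; simp [List.get_eq_getElem, List.getElem_take]
  have := (List.Nodup.get_inj_iff hl).mp heq
  simp at this; omega

lemma mem_take_of_get {α : Type*} (l : List α) (j k : ℕ) (hj : j < l.length) (hjk : j < k) :
    l.get ⟨j, hj⟩ ∈ l.take k := by
  have hlen : j < (l.take k).length := by simp; omega
  have heq : (l.take k)[j]'hlen = l[j]'hj := List.getElem_take
  rw [List.get_eq_getElem, ← heq]
  exact List.getElem_mem hlen

lemma mem_take_succ_iff {α : Type*} (l : List α) (hl : l.Nodup) (i : ℕ) (h : i < l.length)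
    (x : α) : (x ∈ l.take (i + 1) ∧ x ≠ l.get ⟨i, h⟩) ↔ x ∈ l.take i := by
  have htake : l.take (i + 1) = l.take i ++ [l.get ⟨i, h⟩] := by
    rw [← List.take_concat_get h, List.concat_eq_append]
    simp [List.get_eq_getElem]
  have hnm := not_mem_take l hl i h
  constructor
  · rintro ⟨hmem, hne⟩
    rw [htake, List.mem_append] at hmem
    rcases hmem with hmem | hmem
    · exact hmem
    · simp at hmem; exact absurd hmem hne
  · intro hmem
    refine ⟨by rw [htake]; exact List.mem_append_left _ hmem, ?_⟩
    rintro rfl; exact hnm hmem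

lemma face_iff_enum {n : ℕ} (X : Set (B n))
    (hX : ∀ x ∈ X, ∃ i j : Fin n, i ≠ j ∧ x = some (i, j)) :
    IsFace X ↔
      ∃ l : List (Fin n × Fin n), l.Nodup ∧ {e | e ∈ l} = {e | some e ∈ X} ∧
        ∀ (i : ℕ) (h : i < l.length),
          SepEdge {e | e ∈ l.take (i + 1)} (l.get ⟨i, h⟩) := by
  constructor
  · rintro ⟨l, hnd, hset, hcond⟩
    have hne : ∀ x ∈ l, x ≠ none := by
      intro x hx
      have : x ∈ X := hset ▸ hx
      obtain ⟨i, j, _, rfl⟩ := hX x this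
      simp
    obtain ⟨l', rfl⟩ := exists_map_some l hne
    have hnd' : l'.Nodup := hnd.of_map _
    have hsetiff : ∀ e : Fin n × Fin n, e ∈ l' ↔ some e ∈ X := by
      intro e
      rw [← hset]
      simp only [Set.mem_setOf_eq, List.mem_map]
      constructor
      · intro hmem; exact ⟨e, hmem, rfl⟩
      · rintro ⟨f, hf, heq⟩
        obtain rfl := Option.some_injective _ heq
        exact hf
    refine ⟨l', hnd', by ext e; simpa using hsetiff e, ?_⟩
    intro i h
    have hl : i < (List.map some l').length := by simpa using h
    have hc := hcond i hl
    refine ⟨mem_take_of_get l' i (i + 1) h (Nat.lt_succ_self i), ?_⟩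
    intro htg
    apply hc
    have hget : (List.map some l').get ⟨i, hl⟩ = some (l'.get ⟨i, h⟩) := by
      simp [List.get_eq_getElem]
    rw [hget]
    rcases hpair : l'.get ⟨i, h⟩ with ⟨a, b⟩
    rw [gen_some_iff]
    have htg' := htg
    rw [hpair] at htg'
    refine Relation.TransGen.mono ?_ _ _ htg'
    intro x y hxy
    have : (x, y) ∈ l'.take i := by
      rw [← mem_take_succ_iff l' hnd' i h (x, y)]
      rw [hpair]; exact hxy
    show some (x, y) ∈ List.take i (List.map some l')
    rw [← List.map_take]
    exact List.mem_map_of_mem this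
  · rintro ⟨l', hnd', hset', hcond'⟩
    refine ⟨List.map some l', hnd'.map (Option.some_injective _), ?_, ?_⟩
    · ext x
      simp only [Set.mem_setOf_eq, List.mem_map]
      constructor
      · rintro ⟨e, he, rfl⟩
        have : e ∈ {e | e ∈ l'} := he
        rw [hset'] at this; exact this
      · intro hx
        obtain ⟨i, j, _, rfl⟩ := hX x hx
        refine ⟨(i, j), ?_, rfl⟩
        have : (i, j) ∈ {e | some e ∈ X} := hx
        rw [← hset'] at this; exact this
    · intro i h
      have h' : i < l'.length := by simpa using h
      have hget : (List.map some l').get ⟨i, h⟩ = some (l'.get ⟨i, h'⟩) := by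
        simp [List.get_eq_getElem]
      rw [hget]
      rcases hpair : l'.get ⟨i, h'⟩ with ⟨a, b⟩
      rw [gen_some_iff]
      intro htg
      apply (hcond' i h').2
      rw [hpair]
      refine Relation.TransGen.mono ?_ _ _ htg
      intro x y hxy
      have hxy' : (x, y) ∈ l'.take i := by
        have hxy2 : some (x, y) ∈ List.take i (List.map some l') := hxy
        rw [← List.map_take, List.mem_map] at hxy2
        obtain ⟨e, he, heq⟩ := hxy2
        obtain rfl : e = (x, y) := Option.some_injective _ heq
        exact he
      have := (mem_take_succ_iff l' hnd' i h' (x, y)).mpr hxy'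
      rw [hpair] at this
      exact this

open Classical in
lemma enum_of_sep {n : ℕ} (F : Finset (Fin n × Fin n)) :
    (∀ Es : Set (Fin n × Fin n), Es ⊆ ↑F → Es.Nonempty → ∃ e, SepEdge Es e) →
    ∃ l : List (Fin n × Fin n), l.Nodup ∧ {e | e ∈ l} = ↑F ∧
      ∀ (i : ℕ) (h : i < l.length), SepEdge {e | e ∈ l.take (i + 1)} (l.get ⟨i, h⟩) := by
  induction F using Finset.strongInduction with
  | _ F ih =>
    intro hsep
    rcases F.eq_empty_or_nonempty with rfl | hFne
    · exact ⟨[], by simp, by simp, by intro i h; simp at h⟩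
    · obtain ⟨e, he⟩ := hsep ↑F subset_rfl (Finset.coe_nonempty.mpr hFne)
      have heF : e ∈ F := by exact_mod_cast he.1
      obtain ⟨l₀, hnd₀, hset₀, hcond₀⟩ := ih (F.erase e) (Finset.erase_ssubset heF)
        (fun Es hsub hne => hsep Es
          (hsub.trans (Finset.coe_subset.mpr (Finset.erase_subset _ _))) hne)
      have henl : e ∉ l₀ := by
        intro hmem
        have : e ∈ (↑(F.erase e) : Set _) := hset₀ ▸ hmem
        simp at this
      refine ⟨l₀ ++ [e], ?_, ?_, ?_⟩
      · rw [List.nodup_append]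
        refine ⟨hnd₀, List.nodup_singleton e, ?_⟩
        intro a ha b hb hae
        rw [List.mem_singleton] at hb
        subst hb; subst hae
        exact henl ha
      · ext x
        simp only [Set.mem_setOf_eq, List.mem_append, List.mem_singleton]
        constructor
        · rintro (hx | rfl)
          · have : x ∈ (↑(F.erase e) : Set _) := hset₀ ▸ hx
            simp at this
            exact_mod_cast this.1
          · exact_mod_cast heF
        · intro hx
          by_cases hxe : x = e
          · right; exact hxe
          · left
            have : x ∈ (↑(F.erase e) : Set _) := by
              simp
              exact ⟨by exact_mod_cast hx, hxe⟩
            rw [← hset₀] at this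
            exact this
      · intro i h
        simp only [List.length_append, List.length_singleton] at h
        rcases Nat.lt_or_ge i l₀.length with hi | hi
        · have ht : (l₀ ++ [e]).take (i + 1) = l₀.take (i + 1) :=
            List.take_append_of_le_length hi
          have hg : (l₀ ++ [e]).get ⟨i, by simp; omega⟩ = l₀.get ⟨i, hi⟩ := by
            simp only [List.get_eq_getElem]
            exact List.getElem_append_left hi
          rw [ht, hg]
          exact hcond₀ i hi
        · have hieq : i = l₀.length := by omega
          subst hieq
          have ht : (l₀ ++ [e]).take (l₀.length + 1) = l₀ ++ [e] := by
            apply List.take_of_length_le; simp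
          have hg : (l₀ ++ [e]).get ⟨l₀.length, by simp⟩ = e := by
            simp [List.get_eq_getElem]
          rw [ht, hg]
          have hseteq : {x | x ∈ l₀ ++ [e]} = (↑F : Set _) := by
            ext x
            simp only [Set.mem_setOf_eq, List.mem_append, List.mem_singleton]
            constructor
            · rintro (hx | rfl)
              · have : x ∈ (↑(F.erase e) : Set _) := hset₀ ▸ hx
                simp at this
                exact_mod_cast this.1
              · exact_mod_cast heF
            · intro hx
              by_cases hxe : x = e
              · right; exact hxe
              · left
                have : x ∈ (↑(F.erase e) : Set _) := by
                  simp
                  exact ⟨by exact_mod_cast hx, hxe⟩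
                rw [← hset₀] at this
                exact this
          rw [hseteq]
          exact he

lemma sep_of_enum {n : ℕ} (l : List (Fin n × Fin n)) (hnd : l.Nodup)
    (hcond : ∀ (i : ℕ) (h : i < l.length), SepEdge {e | e ∈ l.take (i + 1)} (l.get ⟨i, h⟩))
    (Es : Set (Fin n × Fin n)) (hsub : Es ⊆ {e | e ∈ l}) (hne : Es.Nonempty) :
    ∃ e, SepEdge Es e := by
  classical
  obtain ⟨f, hf⟩ := hne
  obtain ⟨⟨jf, hjf⟩, hgf⟩ := List.mem_iff_get.mp (hsub hf)
  set I : Finset ℕ := (Finset.range l.length).filter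
    (fun i => ∃ h : i < l.length, l.get ⟨i, h⟩ ∈ Es) with hI
  have hIne : I.Nonempty := by
    refine ⟨jf, ?_⟩
    simp only [hI, Finset.mem_filter, Finset.mem_range]
    exact ⟨hjf, hjf, hgf ▸ hf⟩
  set k := I.max' hIne with hk
  have hkI : k ∈ I := I.max'_mem hIne
  simp only [hI, Finset.mem_filter, Finset.mem_range] at hkI
  obtain ⟨hklt, hkmem⟩ := hkI
  refine ⟨l.get ⟨k, hklt⟩, hkmem.2, ?_⟩
  intro htg
  apply (hcond k hklt).2
  refine Relation.TransGen.mono ?_ _ _ htg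
  rintro x y ⟨hxy, hne'⟩
  refine ⟨?_, hne'⟩
  obtain ⟨⟨j, hj⟩, hgj⟩ := List.mem_iff_get.mp (hsub hxy)
  have hjI : j ∈ I := by
    simp only [hI, Finset.mem_filter, Finset.mem_range]
    exact ⟨hj, hj, hgj ▸ hxy⟩
  have hjk : j ≤ k := I.le_max' j hjI
  have := mem_take_of_get l j (k + 1) hj (by omega)
  rw [hgj] at this
  exact this

/-- For `X ⊆ B(n)` with no idempotents, the following are equivalent:
(i) `X` is a face of `H(B(n))`; (ii) the edges of `Γ(X)` can be enumerated so that
each is a separating edge of the subgraph formed by it and its predecessors;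
(iii) every subgraph of `Γ(X)` with at least one edge has a separating edge. -/
theorem stmt14 (n : ℕ) (X : Set (B n))
    (hX : ∀ x ∈ X, ∃ i j : Fin n, i ≠ j ∧ x = some (i, j)) :
    (IsFace X ↔
      ∃ l : List (Fin n × Fin n), l.Nodup ∧ {e | e ∈ l} = {e | some e ∈ X} ∧
        ∀ (i : ℕ) (h : i < l.length),
          SepEdge {e | e ∈ l.take (i + 1)} (l.get ⟨i, h⟩)) ∧
    (IsFace X ↔
      ∀ Es : Set (Fin n × Fin n), Es ⊆ {e | some e ∈ X} → Es.Nonempty →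
        ∃ e, SepEdge Es e) := by
  have h12 := face_iff_enum X hX
  have h23 : (∃ l : List (Fin n × Fin n), l.Nodup ∧ {e | e ∈ l} = {e | some e ∈ X} ∧
      ∀ (i : ℕ) (h : i < l.length), SepEdge {e | e ∈ l.take (i + 1)} (l.get ⟨i, h⟩)) ↔
      (∀ Es : Set (Fin n × Fin n), Es ⊆ {e | some e ∈ X} → Es.Nonempty →
        ∃ e, SepEdge Es e) := by
    constructor
    · rintro ⟨l, hnd, hset, hcond⟩ Es hsub hne
      exact sep_of_enum l hnd hcond Es (by rw [hset]; exact hsub) hne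
    · intro hsep
      have hfin : {e : Fin n × Fin n | some e ∈ X}.Finite := Set.toFinite _
      obtain ⟨l, hnd, hset, hcond⟩ := enum_of_sep hfin.toFinset
        (fun Es h hne => hsep Es (by rwa [hfin.coe_toFinset] at h) hne)
      exact ⟨l, hnd, by rw [hset, hfin.coe_toFinset], hcond⟩
  exact ⟨h12, h12.trans h23⟩
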